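/- (Abstract saddle point well-posedness) Let V and M be Hilbert spaces, a : V×V → ℝ a bounded bilinear form that is coercive on the kernel K = {v ∈ V : b(v,μ) = 0 for all μ ∈ M}, and b : V×M → ℝ a bounded bilinear form satisfying the inf-sup condition: there is β > 0 with sup_{v≠0} b(v,μ)/‖v‖_V ≥ β ‖μ‖_M for all μ ∈ M. Then for every f ∈ V' the saddle point problem a(u,v) + b(v,λ) = f(v) for all v ∈ V, b(u,μ) = 0 for all μ ∈ M, has a unique solution (u,λ) ∈ V×M. -/

import Mathlib

open InnerProductSpace RealInnerProductSpace

set_option maxHeartbeats 2000000 in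
/-- Abstract saddle point well-posedness (Babuška–Brezzi): if `a` is bounded
and coercive on the kernel `K = {v | b(v,μ) = 0 ∀μ}`, and `b` is bounded and
satisfies the inf-sup condition `sup_{v≠0} b(v,μ)/‖v‖ ≥ β‖μ‖`, then for every
bounded linear functional `f` the saddle point problem has a unique solution
`(u,λ)`. -/
theorem abstract_saddle_point_wellposed
    (V M : Type*) [NormedAddCommGroup V] [InnerProductSpace ℝ V]
    [CompleteSpace V] [NormedAddCommGroup M] [InnerProductSpace ℝ M]
    [CompleteSpace M]
    (a : V →ₗ[ℝ] V →ₗ[ℝ] ℝ) (b : V →ₗ[ℝ] M →ₗ[ℝ] ℝ)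
    (Ca Cb αc βc : ℝ)
    (ha_bdd : ∀ u v : V, |a u v| ≤ Ca * ‖u‖ * ‖v‖)
    (hb_bdd : ∀ (v : V) (μ : M), |b v μ| ≤ Cb * ‖v‖ * ‖μ‖)
    (hαc : 0 < αc)
    (hcoercive : ∀ v : V, (∀ μ : M, b v μ = 0) → αc * ‖v‖ ^ 2 ≤ a v v)
    (hβc : 0 < βc)
    (hinfsup : ∀ μ : M,
      βc * ‖μ‖ ≤ sSup {c : ℝ | ∃ v : V, v ≠ 0 ∧ c = b v μ / ‖v‖}) :
    ∀ f : V →L[ℝ] ℝ, ∃! p : V × M,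
      (∀ v : V, a p.1 v + b v p.2 = f v) ∧ (∀ μ : M, b p.1 μ = 0) := by
  intro f
  -- continuous versions of the bilinear forms
  set a' : V →L[ℝ] V →L[ℝ] ℝ :=
    LinearMap.mkContinuous₂ a Ca (fun u v => by
      rw [Real.norm_eq_abs]; exact ha_bdd u v) with ha'
  set b' : V →L[ℝ] M →L[ℝ] ℝ :=
    LinearMap.mkContinuous₂ b Cb (fun v μ => by
      rw [Real.norm_eq_abs]; exact hb_bdd v μ) with hb'
  have ha'app : ∀ u v : V, a' u v = a u v := fun u v => rfl
  have hb'app : ∀ (v : V) (μ : M), b' v μ = b v μ := fun v μ => rfl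
  -- the operator `Bd : M →L[ℝ] V` with `⟪Bd μ, v⟫ = b v μ`
  set Bd : M →L[ℝ] V :=
    LinearMap.mkContinuous
      { toFun := fun μ => (toDual ℝ V).symm (b'.flip μ)
        map_add' := fun μ ν => by simp
        map_smul' := fun c μ => by simp }
      ‖b'.flip‖ (fun μ => by
        simp only [LinearMap.coe_mk, AddHom.coe_mk]
        rw [LinearIsometryEquiv.norm_map]
        exact (b'.flip).le_opNorm μ) with hBddef
  have hBd : ∀ (μ : M) (v : V), ⟪Bd μ, v⟫_ℝ = b v μ := fun μ v => by
    simp [hBddef, toDual_symm_apply, LinearMap.mkContinuous_apply, hb'app]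
  -- the inf-sup condition gives a lower bound on `Bd`
  have hlow : ∀ μ : M, βc * ‖μ‖ ≤ ‖Bd μ‖ := by
    intro μ
    refine le_trans (hinfsup μ) (Real.sSup_le ?_ (norm_nonneg _))
    rintro c ⟨v, hv, rfl⟩
    have hv' : (0:ℝ) < ‖v‖ := norm_pos_iff.mpr hv
    rw [div_le_iff₀ hv']
    calc b v μ = ⟪Bd μ, v⟫_ℝ := (hBd μ v).symm
      _ ≤ ‖Bd μ‖ * ‖v‖ := real_inner_le_norm _ _
  -- `Bd` is antilipschitz, hence has closed range
  have halip : AntilipschitzWith (βc⁻¹).toNNReal Bd := by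
    refine Bd.antilipschitz_of_bound fun μ => ?_
    have h := hlow μ
    rw [Real.coe_toNNReal' βc⁻¹, max_eq_left_of_lt (inv_pos.mpr hβc)]
    have h2 := mul_le_mul_of_nonneg_left h (le_of_lt (inv_pos.mpr hβc))
    rwa [← mul_assoc, inv_mul_cancel₀ hβc.ne', one_mul] at h2
  set R : Submodule ℝ V := LinearMap.range (Bd : M →ₗ[ℝ] V) with hRdef
  have hRclosed : IsClosed (R : Set V) := by
    have := halip.isClosed_range Bd.uniformContinuous
    simpa [hRdef, LinearMap.coe_range] using this
  set KS : Submodule ℝ V := Rᗮ with hKSdef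
  -- `KS` is exactly the kernel of `b`
  have hK : ∀ v : V, v ∈ KS ↔ ∀ μ : M, b v μ = 0 := by
    intro v
    constructor
    · intro hv μ
      rw [← hBd μ v]
      exact hv (Bd μ) ⟨μ, rfl⟩
    · rintro hv u ⟨μ, rfl⟩
      exact (hBd μ v).trans (hv μ)
  have hKSorth : KSᗮ = R := by
    rw [hKSdef, Submodule.orthogonal_orthogonal_eq_closure]
    exact hRclosed.submodule_topologicalClosure_eq
  haveI : CompleteSpace KS := R.isClosed_orthogonal.completeSpace_coe
  -- restrict `a` to `KS` and apply Lax–Milgram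
  set aK : KS →L[ℝ] KS →L[ℝ] ℝ :=
    ((a'.comp KS.subtypeL).flip.comp KS.subtypeL).flip with haKdef
  have haKapp : ∀ u v : KS, aK u v = a (u : V) (v : V) := fun u v => rfl
  have hcoer : IsCoercive aK := by
    refine ⟨αc, hαc, fun u => ?_⟩
    have hb0 : ∀ μ : M, b (u : V) μ = 0 := (hK (u : V)).mp u.2
    have h := hcoercive (u : V) hb0
    have hn : ‖u‖ = ‖(u : V)‖ := rfl
    rw [haKapp, hn]
    rw [pow_two] at h
    linarith [h]
  set rf : KS := (toDual ℝ KS).symm (f.comp KS.subtypeL) with hrfdef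
  set u0 : KS := hcoer.continuousLinearEquivOfBilin.symm rf with hu0def
  have hu0key : ∀ v : KS, a (u0 : V) (v : V) = f (v : V) := by
    intro v
    have h1 : ⟪hcoer.continuousLinearEquivOfBilin u0, v⟫_ℝ = aK u0 v :=
      hcoer.continuousLinearEquivOfBilin_apply u0 v
    rw [hu0def, ContinuousLinearEquiv.apply_symm_apply] at h1
    have h2 : ⟪rf, v⟫_ℝ = f (v : V) := by rw [hrfdef, toDual_symm_apply]; rfl
    rw [← haKapp u0 v, ← h1, h2]
  -- construct the multiplier
  set g : V →L[ℝ] ℝ := f - a' (u0 : V) with hgdef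
  set rg : V := (toDual ℝ V).symm g with hrgdef
  have hrgapp : ∀ v : V, ⟪rg, v⟫_ℝ = f v - a (u0 : V) v := fun v => by
    rw [hrgdef, toDual_symm_apply, hgdef]
    simp [ContinuousLinearMap.sub_apply, ha'app]
  have hrgmem : rg ∈ KSᗮ := (Submodule.mem_orthogonal KS rg).mpr (fun v hv => by
    rw [real_inner_comm, hrgapp]
    have h := hu0key ⟨v, hv⟩
    simpa [sub_eq_zero] using h.symm)
  rw [hKSorth] at hrgmem
  obtain ⟨lam, hlam⟩ := hrgmem
  have hblamval : ∀ v : V, b v lam = f v - a (u0 : V) v := fun v => by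
    rw [← hBd lam v, show Bd lam = rg from hlam, hrgapp]
  have hbv0 : ∀ (v : V), v ∈ KS → ∀ m : M, b v m = 0 := fun v hv m => by
    rw [← hBd m v]; exact hv (Bd m) ⟨m, rfl⟩
  refine ⟨((u0 : V), lam), ⟨?_, ?_⟩, ?_⟩
  · intro v
    have h := hblamval v
    show a (u0 : V) v + b v lam = f v
    linarith
  · exact fun μ => (hK (u0 : V)).mp u0.2 μ
  · rintro ⟨u, lam'⟩ ⟨hp1, hp2⟩
    replace hp1 : ∀ v : V, a u v + b v lam' = f v := hp1
    replace hp2 : ∀ μ : M, b u μ = 0 := hp2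
    have huK : u ∈ KS := (hK u).mpr hp2
    have key : ∀ v : V, v ∈ KS → a (u - (u0 : V)) v = 0 := by
      intro v hv
      have e1 : a u v + b v lam' = f v := hp1 v
      have e2 : a (u0 : V) v = f v := hu0key ⟨v, hv⟩
      have e3 : b v lam' = 0 := hbv0 v hv lam'
      have e4 : a (u - (u0 : V)) v = a u v - a (u0 : V) v := by
        simp [map_sub, LinearMap.sub_apply]
      rw [e4]; linarith
    have hdmem : u - (u0 : V) ∈ KS := KS.sub_mem huK u0.2
    have hu : u = (u0 : V) := by
      have h1 := hcoercive (u - (u0 : V)) (fun m => hbv0 _ hdmem m)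
      rw [key _ hdmem] at h1
      have h2 : ‖u - (u0 : V)‖ ^ 2 ≤ 0 := by nlinarith [sq_nonneg ‖u - (u0 : V)‖]
      have h3 : ‖u - (u0 : V)‖ ^ 2 = 0 := le_antisymm h2 (sq_nonneg _)
      have h4 : u - (u0 : V) = 0 :=
        norm_eq_zero.mp (pow_eq_zero_iff two_ne_zero |>.mp h3)
      exact sub_eq_zero.mp h4
    have hblam : ∀ v : V, b v lam' = b v lam := by
      intro v
      have e1 := hp1 v
      rw [hu] at e1
      have e2 := hblamval v
      linarith
    have hz : Bd (lam' - lam) = 0 := by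
      have hin : ∀ v : V, ⟪Bd (lam' - lam), v⟫_ℝ = 0 := fun v => by
        rw [hBd]
        simp [map_sub, hblam v]
      have := hin (Bd (lam' - lam))
      rwa [inner_self_eq_zero] at this
    have hlz : lam' = lam := by
      have h1 := hlow (lam' - lam)
      rw [hz, norm_zero] at h1
      have h2 : ‖lam' - lam‖ = 0 :=
        le_antisymm (by nlinarith [norm_nonneg (lam' - lam)]) (norm_nonneg _)
      exact sub_eq_zero.mp (norm_eq_zero.mp h2)
    show (u, lam') = ((u0 : V), lam)
    rw [hu, hlz]
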